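/- The identity operator on the Banach lattice c of convergent sequences is a quasi Levi operator: every norm-bounded increasing net in c is order-Cauchy. -/

import Mathlib

/-- Order convergence of a net. -/
def OConvNet {ι F : Type*} [Preorder ι] [Lattice F] [AddCommGroup F]
    (x : ι → F) (x₀ : F) : Prop :=
  ∃ D : Set F, D.Nonempty ∧ DirectedOn (· ≥ ·) D ∧ IsGLB D 0 ∧
    ∀ y ∈ D, ∃ α₀, ∀ α, α₀ ≤ α → |x α - x₀| ≤ y

/-- Order convergence of a sequence. -/
def OConvSeq {F : Type*} [Lattice F] [AddCommGroup F] (x : ℕ → F) (x₀ : F) : Prop :=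
  ∃ y : ℕ → F, Antitone y ∧ IsGLB (Set.range y) 0 ∧
    ∀ m, ∃ n₀, ∀ n, n₀ ≤ n → |x n - x₀| ≤ y m

/-- A net is order-Cauchy if its double net of differences order converges to `0`. -/
def OCauchyNet {ι F : Type*} [Preorder ι] [Lattice F] [AddCommGroup F]
    (x : ι → F) : Prop :=
  OConvNet (fun p : ι × ι => x p.1 - x p.2) (0 : F)

/-- A sequence is order-Cauchy if its double sequence of differences order converges to `0`. -/
def OCauchySeq' {F : Type*} [Lattice F] [AddCommGroup F] (x : ℕ → F) : Prop :=
  OConvNet (fun p : ℕ × ℕ => x p.1 - x p.2) (0 : F)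

section Maps
variable {E F : Type*} [Lattice E] [AddCommGroup E] [Norm E] [Lattice F] [AddCommGroup F]

def IsLeviMap (T : E → F) : Prop :=
  ∀ (ι : Type) [Nonempty ι] [Preorder ι] [IsDirected ι (· ≤ ·)],
    ∀ x : ι → E, Monotone x → (∃ C, ∀ α, ‖x α‖ ≤ C) →
      ∃ x₀ : E, OConvNet (fun α => T (x α)) (T x₀)

def IsSigmaLeviMap (T : E → F) : Prop :=
  ∀ x : ℕ → E, Monotone x → (∃ C, ∀ n, ‖x n‖ ≤ C) →
    ∃ x₀ : E, OConvSeq (fun n => T (x n)) (T x₀)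

def IsCqLeviMap (T : E → F) : Prop :=
  ∀ (ι : Type) [Nonempty ι] [Preorder ι] [IsDirected ι (· ≤ ·)],
    ∀ x : ι → E, Monotone x → (∃ C, ∀ α, ‖x α‖ ≤ C) →
      ∃ y₀ : F, OConvNet (fun α => T (x α)) y₀

def IsCqSigmaLeviMap (T : E → F) : Prop :=
  ∀ x : ℕ → E, Monotone x → (∃ C, ∀ n, ‖x n‖ ≤ C) →
    ∃ y₀ : F, OConvSeq (fun n => T (x n)) y₀

def IsQLeviMap (T : E → F) : Prop :=
  ∀ (ι : Type) [Nonempty ι] [Preorder ι] [IsDirected ι (· ≤ ·)],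
    ∀ x : ι → E, Monotone x → (∃ C, ∀ α, ‖x α‖ ≤ C) →
      OCauchyNet (fun α => T (x α))

def IsQSigmaLeviMap (T : E → F) : Prop :=
  ∀ x : ℕ → E, Monotone x → (∃ C, ∀ n, ‖x n‖ ≤ C) →
    OCauchySeq' (fun n => T (x n))

end Maps

open Filter Topology

/-- The subspace `c` of convergent real sequences. -/
def cSub : Submodule ℝ (ℕ → ℝ) where
  carrier := {x | ∃ l : ℝ, Tendsto x atTop (nhds l)}
  add_mem' := by rintro x y ⟨l, hl⟩ ⟨m, hm⟩; exact ⟨l + m, hl.add hm⟩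
  zero_mem' := ⟨0, tendsto_const_nhds⟩
  smul_mem' := by rintro c x ⟨l, hl⟩; exact ⟨c * l, hl.const_mul c⟩

/-- The subspace `c₀` of real null sequences. -/
def c0Sub : Submodule ℝ (ℕ → ℝ) where
  carrier := {x | Tendsto x atTop (nhds 0)}
  add_mem' := by intro x y hx hy; have := hx.add hy; simp only [add_zero] at this; exact this
  zero_mem' := tendsto_const_nhds
  smul_mem' := by intro c x hx; have := hx.const_mul c; simp only [mul_zero] at this; exact this

/-- The subspace `ℓ^∞` of bounded real sequences. -/
def LinfSub : Submodule ℝ (ℕ → ℝ) where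
  carrier := {x | ∃ C : ℝ, ∀ n, |x n| ≤ C}
  add_mem' := by
    rintro x y ⟨C, hC⟩ ⟨D, hD⟩
    exact ⟨C + D, fun n => (abs_add_le _ _).trans (add_le_add (hC n) (hD n))⟩
  zero_mem' := ⟨0, fun n => by simp⟩
  smul_mem' := by
    rintro c x ⟨C, hC⟩
    exact ⟨|c| * C, fun n => by
      simpa [abs_mul] using mul_le_mul_of_nonneg_left (hC n) (abs_nonneg c)⟩

instance : Lattice cSub :=
  { (inferInstance : PartialOrder cSub) with
    sup := fun x y => ⟨x.1 ⊔ y.1, by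
      obtain ⟨l, hl⟩ := x.2; obtain ⟨m, hm⟩ := y.2; exact ⟨l ⊔ m, hl.max hm⟩⟩
    inf := fun x y => ⟨x.1 ⊓ y.1, by
      obtain ⟨l, hl⟩ := x.2; obtain ⟨m, hm⟩ := y.2; exact ⟨l ⊓ m, hl.min hm⟩⟩
    le_sup_left := fun a b => (le_sup_left : a.1 ≤ a.1 ⊔ b.1)
    le_sup_right := fun a b => (le_sup_right : b.1 ≤ a.1 ⊔ b.1)
    sup_le := fun a b c h₁ h₂ => (sup_le h₁ h₂ : a.1 ⊔ b.1 ≤ c.1)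
    inf_le_left := fun a b => (inf_le_left : a.1 ⊓ b.1 ≤ a.1)
    inf_le_right := fun a b => (inf_le_right : a.1 ⊓ b.1 ≤ b.1)
    le_inf := fun a b c h₁ h₂ => (le_inf h₁ h₂ : a.1 ≤ b.1 ⊓ c.1) }

instance : Lattice c0Sub :=
  { (inferInstance : PartialOrder c0Sub) with
    sup := fun x y => ⟨x.1 ⊔ y.1, by
      have := x.2.max y.2; simp only [max_self] at this; exact this⟩
    inf := fun x y => ⟨x.1 ⊓ y.1, by
      have := x.2.min y.2; simp only [min_self] at this; exact this⟩
    le_sup_left := fun a b => (le_sup_left : a.1 ≤ a.1 ⊔ b.1)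
    le_sup_right := fun a b => (le_sup_right : b.1 ≤ a.1 ⊔ b.1)
    sup_le := fun a b c h₁ h₂ => (sup_le h₁ h₂ : a.1 ⊔ b.1 ≤ c.1)
    inf_le_left := fun a b => (inf_le_left : a.1 ⊓ b.1 ≤ a.1)
    inf_le_right := fun a b => (inf_le_right : a.1 ⊓ b.1 ≤ b.1)
    le_inf := fun a b c h₁ h₂ => (le_inf h₁ h₂ : a.1 ≤ b.1 ⊓ c.1) }

instance : Lattice LinfSub :=
  { (inferInstance : PartialOrder LinfSub) with
    sup := fun x y => ⟨x.1 ⊔ y.1, by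
      obtain ⟨C, hC⟩ := x.2; obtain ⟨D, hD⟩ := y.2
      exact ⟨C ⊔ D, fun n => by
        have h1 := hC n; have h2 := hD n
        simp only [Pi.sup_apply]
        rcases le_total (x.1 n) (y.1 n) with h | h
        · rw [sup_eq_right.2 h]; exact h2.trans le_sup_right
        · rw [sup_eq_left.2 h]; exact h1.trans le_sup_left⟩⟩
    inf := fun x y => ⟨x.1 ⊓ y.1, by
      obtain ⟨C, hC⟩ := x.2; obtain ⟨D, hD⟩ := y.2
      exact ⟨C ⊔ D, fun n => by
        have h1 := hC n; have h2 := hD n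
        simp only [Pi.inf_apply]
        rcases le_total (x.1 n) (y.1 n) with h | h
        · rw [inf_eq_left.2 h]; exact h1.trans le_sup_left
        · rw [inf_eq_right.2 h]; exact h2.trans le_sup_right⟩⟩
    le_sup_left := fun a b => (le_sup_left : a.1 ≤ a.1 ⊔ b.1)
    le_sup_right := fun a b => (le_sup_right : b.1 ≤ a.1 ⊔ b.1)
    sup_le := fun a b c h₁ h₂ => (sup_le h₁ h₂ : a.1 ⊔ b.1 ≤ c.1)
    inf_le_left := fun a b => (inf_le_left : a.1 ⊓ b.1 ≤ a.1)
    inf_le_right := fun a b => (inf_le_right : a.1 ⊓ b.1 ≤ b.1)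
    le_inf := fun a b c h₁ h₂ => (le_inf h₁ h₂ : a.1 ≤ b.1 ⊓ c.1) }

noncomputable instance : Norm cSub := ⟨fun x => ⨆ n, |x.1 n|⟩
noncomputable instance : Norm c0Sub := ⟨fun x => ⨆ n, |x.1 n|⟩
noncomputable instance : Norm LinfSub := ⟨fun x => ⨆ n, |x.1 n|⟩

/-- the identity on `c` is quasi Levi: every norm-bounded increasing
net in `c` is order-Cauchy. -/
theorem id_c_qLevi : IsQLeviMap (id : cSub → cSub) := by
  intro ι _ _ _ x hmono hbdd
  classical
  obtain ⟨C, hC⟩ := hbdd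
  -- coordinatewise bound
  have hcoord : ∀ (α : ι) (n : ℕ), |(x α : ℕ → ℝ) n| ≤ C := by
    intro α n
    obtain ⟨l, hl⟩ := (x α).2
    have hb : BddAbove (Set.range fun m => |(x α : ℕ → ℝ) m|) :=
      (hl.abs).bddAbove_range
    exact le_trans (le_ciSup hb n) (hC α)
  have hC0 : 0 ≤ C := le_trans (abs_nonneg _) (hcoord (Classical.arbitrary ι) 0)
  set s : ℕ → ℝ := fun n => ⨆ α, (x α : ℕ → ℝ) n with hs
  have hbdd' : ∀ n, BddAbove (Set.range fun α => (x α : ℕ → ℝ) n) := by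
    intro n; exact ⟨C, by rintro _ ⟨α, rfl⟩; exact (abs_le.mp (hcoord α n)).2⟩
  have hle_s : ∀ (α : ι) (n : ℕ), (x α : ℕ → ℝ) n ≤ s n := fun α n => le_ciSup (hbdd' n) α
  have hexists : ∀ (ε : ℝ), 0 < ε → ∀ n, ∃ γ, s n - ε < (x γ : ℕ → ℝ) n := by
    intro ε hε n
    exact exists_lt_of_lt_ciSup (show s n - ε < s n by simp [hs]; linarith)
  -- the dominating family
  have ymem : ∀ (k : ℕ) (ε : ℝ),
      (fun n => if n ≤ k then ε else 2*C + ε) ∈ cSub := by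
    intro k ε
    refine ⟨2*C + ε, ?_⟩
    have hev : ∀ᶠ n in Filter.atTop,
        (2*C + ε : ℝ) = (if n ≤ k then ε else 2*C + ε) := by
      filter_upwards [Filter.eventually_gt_atTop k] with n hn
      rw [if_neg (not_le.mpr hn)]
    exact tendsto_const_nhds.congr' hev
  set y : ℕ → ℝ → cSub := fun k ε => ⟨fun n => if n ≤ k then ε else 2*C + ε, ymem k ε⟩
    with hy
  refine ⟨{z | ∃ k : ℕ, ∃ ε : ℝ, 0 < ε ∧ z = y k ε}, ⟨y 0 1, 0, 1, one_pos, rfl⟩, ?_, ?_, ?_⟩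
  · -- directed downward
    rintro _ ⟨k₁, ε₁, hε₁, rfl⟩ _ ⟨k₂, ε₂, hε₂, rfl⟩
    refine ⟨y (max k₁ k₂) (min ε₁ ε₂), ⟨max k₁ k₂, min ε₁ ε₂, lt_min hε₁ hε₂, rfl⟩, ?_, ?_⟩
    · intro n
      show (if n ≤ max k₁ k₂ then min ε₁ ε₂ else 2*C + min ε₁ ε₂)
          ≤ (if n ≤ k₁ then ε₁ else 2*C + ε₁)
      by_cases h1 : n ≤ k₁
      · rw [if_pos h1, if_pos (le_trans h1 (le_max_left _ _))]
        exact min_le_left _ _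
      · rw [if_neg h1]
        by_cases h2 : n ≤ max k₁ k₂
        · rw [if_pos h2]
          have : min ε₁ ε₂ ≤ ε₁ := min_le_left _ _
          linarith
        · rw [if_neg h2]
          have : min ε₁ ε₂ ≤ ε₁ := min_le_left _ _
          linarith
    · intro n
      show (if n ≤ max k₁ k₂ then min ε₁ ε₂ else 2*C + min ε₁ ε₂)
          ≤ (if n ≤ k₂ then ε₂ else 2*C + ε₂)
      by_cases h1 : n ≤ k₂
      · rw [if_pos h1, if_pos (le_trans h1 (le_max_right _ _))]
        exact min_le_right _ _
      · rw [if_neg h1]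
        by_cases h2 : n ≤ max k₁ k₂
        · rw [if_pos h2]
          have : min ε₁ ε₂ ≤ ε₂ := min_le_right _ _
          linarith
        · rw [if_neg h2]
          have : min ε₁ ε₂ ≤ ε₂ := min_le_right _ _
          linarith
  · -- IsGLB
    constructor
    · rintro _ ⟨k, ε, hε, rfl⟩
      intro n
      show (0 : ℝ) ≤ if n ≤ k then ε else 2*C + ε
      split
      · linarith
      · linarith
    · intro z hz
      intro n
      show (z : ℕ → ℝ) n ≤ 0
      by_contra hcon
      push_neg at hcon
      have hzle := hz ⟨n, (z : ℕ → ℝ) n / 2, by linarith, rfl⟩ n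
      have : (z : ℕ → ℝ) n ≤ if n ≤ n then (z : ℕ → ℝ) n / 2 else 2*C + (z : ℕ → ℝ) n / 2 :=
        hzle
      rw [if_pos le_rfl] at this
      linarith
  · -- eventual domination
    rintro _ ⟨k, ε, hε, rfl⟩
    -- choose indices making each coordinate ε-close to its sup
    choose γ hγ using hexists ε hε
    obtain ⟨α₀, hα₀⟩ := Finset.exists_le ((Finset.range (k+1)).image γ)
    refine ⟨(α₀, α₀), ?_⟩
    rintro ⟨a, b⟩ ⟨ha, hb⟩
    simp only [id_eq]
    rw [sub_zero]
    intro n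
    show |(x a : ℕ → ℝ) n - (x b : ℕ → ℝ) n| ≤ if n ≤ k then ε else 2*C + ε
    by_cases hn : n ≤ k
    · rw [if_pos hn]
      have hγn : γ n ≤ α₀ := hα₀ _ (Finset.mem_image_of_mem γ (Finset.mem_range.mpr
        (Nat.lt_succ_of_le hn)))
      have h1 : (x (γ n) : ℕ → ℝ) n ≤ (x a : ℕ → ℝ) n :=
        hmono (le_trans hγn ha) n
      have h2 : (x (γ n) : ℕ → ℝ) n ≤ (x b : ℕ → ℝ) n :=
        hmono (le_trans hγn hb) n
      have h3 := hle_s a n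
      have h4 := hle_s b n
      have h5 := hγ n
      rw [abs_sub_le_iff]
      constructor <;> linarith
    · rw [if_neg hn]
      have h1 := abs_le.mp (hcoord a n)
      have h2 := abs_le.mp (hcoord b n)
      rw [abs_sub_le_iff]
      constructor <;> linarith
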